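/- Let U be a binary random variable and Q a finite-alphabet random variable with joint pmf P. Define the Bhattacharyya parameter Z(U|Q) = 2 Σ_q √(P(0,q) P(1,q)) and the conditional entropy H(U|Q) in bits. Then Z(U|Q)² ≤ H(U|Q) ≤ Z(U|Q). -/

import Mathlib

open Finset

open Real

private lemma log_ge_one_sub_inv {x : ℝ} (hx : 0 < x) : 1 - 1/x ≤ Real.log x := by
  have h := Real.log_le_sub_one_of_pos (show (0:ℝ) < x⁻¹ by positivity)
  rw [Real.log_inv] at h
  rw [one_div]
  linarith

private lemma artanh_le_log {s : ℝ} (hs : 1 ≤ s) : 2*(s-1)/(s+1) ≤ Real.log s := by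
  set g : ℝ → ℝ := fun x => Real.log x - 2 + 4/(x+1) with hg
  have hder : ∀ x : ℝ, 0 < x → HasDerivAt g (x⁻¹ + (0*(x+1) - 4*1)/(x+1)^2) x := by
    intro x hx1
    have hx2 : x + 1 ≠ 0 := by positivity
    have h := (((Real.hasDerivAt_log hx1.ne').sub_const 2)).add
        ((hasDerivAt_const x 4).div ((hasDerivAt_id x).add_const 1) hx2)
    simp at h ⊢; exact h
  have key : MonotoneOn g (Set.Ici 1) := by
    apply monotoneOn_of_deriv_nonneg (convex_Ici 1)
    · intro x hx
      have hx0 : x ≠ 0 := by simp only [Set.mem_Ici] at hx; positivity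
      have hx1 : x + 1 ≠ 0 := by simp only [Set.mem_Ici] at hx; positivity
      exact (((Real.continuousAt_log hx0).sub continuousAt_const).add
        (continuousAt_const.div (continuousAt_id.add continuousAt_const) hx1)).continuousWithinAt
    · rw [interior_Ici]
      intro x hx
      exact (hder x (lt_trans one_pos hx)).differentiableAt.differentiableWithinAt
    · rw [interior_Ici]
      intro x hx
      have hx1 : (0:ℝ) < x := lt_trans one_pos hx
      rw [(hder x hx1).deriv]
      have : x⁻¹ + (0 * (x + 1) - 4 * 1) / (x + 1) ^ 2 = (x-1)^2/(x*(x+1)^2) := by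
        field_simp
        ring
      rw [this]
      positivity
  have h0 : g 1 ≤ g s := key (Set.mem_Ici.2 le_rfl) (Set.mem_Ici.2 hs) hs
  have hs1 : s + 1 ≠ 0 := by positivity
  have hg1 : g 1 = 0 := by simp [hg]; norm_num
  have : 2*(s-1)/(s+1) = 2 - 4/(s+1) := by field_simp; ring
  rw [this]
  rw [hg1] at h0
  simp only [hg] at h0
  linarith

private lemma polyA {r : ℝ} (h1 : 1 ≤ r) (h4 : r^8 ≤ 4) :
    2*(r^8+1) ≤ Real.log 2 * (1+r+r^2+r^3+r^4+r^5+r^6+r^7) := by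
  have hr0 : (0:ℝ) < r := lt_of_lt_of_le one_pos h1
  have hr : r ≤ 1.19 := by
    by_contra hc
    push_neg at hc
    have : (1.19:ℝ)^8 < r^8 := by
      apply pow_lt_pow_left₀ hc (by norm_num)
      norm_num
    nlinarith
  have e7 : r^8 ≤ 1.19 * r^7 := by nlinarith [pow_nonneg hr0.le 7]
  have e6 : r^7 ≤ 1.19 * r^6 := by nlinarith [pow_nonneg hr0.le 6]
  have e5 : r^6 ≤ 1.19 * r^5 := by nlinarith [pow_nonneg hr0.le 5]
  have e4 : r^5 ≤ 1.19 * r^4 := by nlinarith [pow_nonneg hr0.le 4]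
  have g2 : (1:ℝ) ≤ r^2 := one_le_pow₀ h1
  have g3 : (1:ℝ) ≤ r^3 := one_le_pow₀ h1
  have hL : (0.6931471803:ℝ) < Real.log 2 := Real.log_two_gt_d9
  have hpos : (0:ℝ) ≤ 1+r+r^2+r^3+r^4+r^5+r^6+r^7 := by positivity
  have key : 2*(r^8+1) ≤ 0.6931471803 * (1+r+r^2+r^3+r^4+r^5+r^6+r^7) := by
    nlinarith [e7, e6, e5, e4, g2, g3, h4, h1]
  nlinarith [key, hpos, hL]

-- derivative of the entropy-ish function
private lemma hasDerivAt_ent {x : ℝ} (h0 : 0 < x) (h1 : x < 1) :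
    HasDerivAt (fun p : ℝ => -(p * Real.log p) - (1-p) * Real.log (1-p))
      (Real.log (1-x) - Real.log x) x := by
  have hu : HasDerivAt (fun p : ℝ => 1 - p) (-1) x := by
    have h := (hasDerivAt_const x (1:ℝ)).sub (hasDerivAt_id x); simp at h; exact h
  have h1x : (0:ℝ) < 1 - x := by linarith
  have hA : HasDerivAt (fun p : ℝ => p * Real.log p) (Real.log x + 1) x := by
    have : HasDerivAt (fun p : ℝ => p * Real.log p) (1 * Real.log x + x * x⁻¹) x := (hasDerivAt_id x).mul (Real.hasDerivAt_log h0.ne')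
    convert this using 1
    field_simp
  have hlog : HasDerivAt (fun p : ℝ => Real.log (1-p)) ((1-x)⁻¹ * (-1)) x :=
    (Real.hasDerivAt_log h1x.ne').comp x hu
  have hB : HasDerivAt (fun p : ℝ => (1-p) * Real.log (1-p))
      (-(Real.log (1-x)) - 1) x := by
    have : HasDerivAt (fun p : ℝ => (1-p) * Real.log (1-p)) (-1 * Real.log (1 - x) + (1 - x) * ((1 - x)⁻¹ * -1)) x := hu.mul hlog
    convert this using 1
    rw [show (1-x)*((1-x)⁻¹*(-1)) = -1 from by field_simp]
    ring
  have : HasDerivAt (fun p : ℝ => -(p * Real.log p) - (1-p) * Real.log (1-p)) (-(Real.log x + 1) - (-(Real.log (1-x)) - 1)) x := (hA.neg).sub hB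
  convert this using 1
  ring

private lemma A_antitone : AntitoneOn
    (fun p : ℝ => -(p * Real.log p) - (1-p) * Real.log (1-p) - 4*Real.log 2*(p*(1-p)))
    (Set.Icc (1/5) (1/2)) := by
  have hder : ∀ x : ℝ, 0 < x → x < 1 →
      HasDerivAt (fun p : ℝ => -(p * Real.log p) - (1-p) * Real.log (1-p) - 4*Real.log 2*(p*(1-p)))
        ((Real.log (1-x) - Real.log x) - 4*Real.log 2*(1-2*x)) x := by
    intro x h0 h1
    have hpoly : HasDerivAt (fun p : ℝ => 4*Real.log 2*(p*(1-p))) (4*Real.log 2*(1-2*x)) x := by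
      have hu : HasDerivAt (fun p : ℝ => 1 - p) (-1) x := by
        have h := (hasDerivAt_const x (1:ℝ)).sub (hasDerivAt_id x); simp at h; exact h
      have : HasDerivAt (fun p : ℝ => 4*Real.log 2*(p*(1-p))) (4*Real.log 2*(1 * (1 - id x) + id x * (-1))) x := ((hasDerivAt_id x).mul hu).const_mul (4*Real.log 2)
      convert this using 1
      simp only [id_eq]
      ring
    exact (hasDerivAt_ent h0 h1).sub hpoly
  apply antitoneOn_of_deriv_nonpos (convex_Icc _ _)
  · -- continuity
    intro x hx
    obtain ⟨ha, hb⟩ := hx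
    have h0 : (0:ℝ) < x := by linarith
    have h1 : x < 1 := by linarith
    exact (hder x h0 h1).differentiableAt.continuousAt.continuousWithinAt
  · rw [interior_Icc]
    intro x hx
    obtain ⟨ha, hb⟩ := hx
    exact (hder x (by linarith) (by linarith)).differentiableAt.differentiableWithinAt
  · rw [interior_Icc]
    intro x hx
    obtain ⟨ha, hb⟩ := hx
    rw [(hder x (by linarith) (by linarith)).deriv]
    have h0 : (0:ℝ) < x := by linarith
    have h1x : (0:ℝ) < 1 - x := by linarith
    set t : ℝ := (1-x)/x with ht
    have htpos : 0 < t := by positivity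
    have ht1 : 1 ≤ t := by rw [ht, le_div_iff₀ h0]; linarith
    have ht4 : t ≤ 4 := by rw [ht, div_le_iff₀ h0]; linarith
    set r : ℝ := Real.sqrt (Real.sqrt (Real.sqrt t)) with hr
    have hrpos : 0 < r := by
      apply Real.sqrt_pos.2; apply Real.sqrt_pos.2; exact Real.sqrt_pos.2 htpos
    have hr8 : r^8 = t := by
      rw [hr]
      rw [show (8:ℕ) = 2*(2*2) by norm_num, pow_mul, Real.sq_sqrt (Real.sqrt_nonneg _),
        pow_mul, Real.sq_sqrt (Real.sqrt_nonneg _), Real.sq_sqrt htpos.le]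
    have hr1 : 1 ≤ r := by
      rw [hr]
      apply Real.one_le_sqrt.2
      apply Real.one_le_sqrt.2
      exact Real.one_le_sqrt.2 ht1
    have hr4 : r^8 ≤ 4 := by rw [hr8]; exact ht4
    have hlogr : Real.log t ≤ 8*(r-1) := by
      have : Real.log t = 8 * Real.log r := by
        rw [← hr8, Real.log_pow]; norm_num
      rw [this]
      have := Real.log_le_sub_one_of_pos hrpos
      linarith
    have hlogt : Real.log (1-x) - Real.log x = Real.log t := by
      rw [ht, Real.log_div h1x.ne' h0.ne']
    rw [hlogt]
    -- 1 - 2x = x(t-1), x(t+1) = 1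
    have hxt : x * (t+1) = 1 := by rw [ht]; field_simp; ring
    have h2x : 1 - 2*x = x*(t-1) := by rw [ht]; field_simp; ring
    have hkey := polyA hr1 hr4
    -- (t+1) * log t ≤ 8(r-1)(r^8+1) ≤ 4 log2 (r^8-1) = 4 log2 (t-1)
    have hmul : (r-1) * (2*(r^8+1)) ≤ (r-1) * (Real.log 2 * (1+r+r^2+r^3+r^4+r^5+r^6+r^7)) :=
      mul_le_mul_of_nonneg_left hkey (by linarith)
    have hfact : (r-1) * (1+r+r^2+r^3+r^4+r^5+r^6+r^7) = r^8 - 1 := by ring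
    have hstep : 8*(r-1)*(t+1) ≤ 4*Real.log 2*(t-1) := by
      rw [← hr8]
      nlinarith [hmul]
    have htp1 : (0:ℝ) < t + 1 := by linarith
    have : Real.log t * (t+1) ≤ 8*(r-1)*(t+1) :=
      mul_le_mul_of_nonneg_right hlogr htp1.le
    -- goal : log t - 4 log2 (1-2x) ≤ 0
    rw [h2x]
    have hgoal : Real.log t * (t+1) ≤ 4*Real.log 2*(t-1) := le_trans this hstep
    -- divide by (t+1): log t ≤ 4 log2 (t-1)/(t+1) and x(t-1) = (t-1)·x with x(t+1)=1
    have : 4*Real.log 2*(x*(t-1)) * (t+1) = 4*Real.log 2*(t-1) := by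
      have : x*(t-1)*(t+1) = (t-1) * (x*(t+1)) := by ring
      rw [mul_assoc (4*Real.log 2), this, hxt]
      ring
    nlinarith [hgoal, htp1, this]

private lemma normA_half {p : ℝ} (h0 : 0 ≤ p) (h1 : p ≤ 1/2) :
    4 * Real.log 2 * (p * (1-p)) ≤ -(p * Real.log p) - (1-p) * Real.log (1-p) := by
  rcases eq_or_lt_of_le h0 with rfl | hp
  · simp
  have hq0 : (0:ℝ) < 1 - p := by linarith
  have hL : Real.log 2 < 0.6931471808 := Real.log_two_lt_d9
  have hL' : (0.6931471803:ℝ) < Real.log 2 := Real.log_two_gt_d9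
  have hqlog : (1-p) * Real.log (1-p) ≤ (1-p) * (-p) := by
    apply mul_le_mul_of_nonneg_left _ hq0.le
    have := Real.log_le_sub_one_of_pos hq0
    linarith
  rcases le_or_gt p (1/8) with h8 | h8
  · -- p ∈ (0, 1/8]
    have hlp : Real.log p ≤ -(3*Real.log 2) := by
      have h := Real.log_le_log hp h8
      have : Real.log (1/8 : ℝ) = -(3*Real.log 2) := by
        rw [show (1/8 : ℝ) = ((2:ℝ)^3)⁻¹ by norm_num, Real.log_inv, Real.log_pow]
        push_cast; ring
      linarith
    have hmul : p * Real.log p ≤ p * (-(3*Real.log 2)) :=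
      mul_le_mul_of_nonneg_left hlp h0
    nlinarith [mul_pos hp hq0, mul_nonneg h0 h0, sq_nonneg p,
      mul_le_of_le_one_left (show (0:ℝ) ≤ 4*Real.log 2 - 1 by linarith) (show 1-p ≤ 1 by linarith)]
  rcases le_or_gt p (1/5) with h5 | h5
  · -- p ∈ (1/8, 1/5]
    have hlog54 : Real.log 5 - 2*Real.log 2 ≥ 1/5 := by
      have h1 : Real.log (5/4 : ℝ) = Real.log 5 - Real.log 4 := Real.log_div (by norm_num) (by norm_num)
      have h2 : Real.log (4:ℝ) = 2*Real.log 2 := by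
        rw [show (4:ℝ) = 2^2 by norm_num, Real.log_pow]; push_cast; ring
      have h3 := log_ge_one_sub_inv (show (0:ℝ) < 5/4 by norm_num)
      rw [h1, h2] at h3
      norm_num at h3
      linarith
    have hlp : Real.log p ≤ -(2*Real.log 2 + 1/5) := by
      have h := Real.log_le_log hp h5
      have : Real.log (1/5 : ℝ) = -Real.log 5 := by
        rw [show (1/5:ℝ) = (5:ℝ)⁻¹ by norm_num, Real.log_inv]
      linarith
    have hmul : p * Real.log p ≤ p * (-(2*Real.log 2 + 1/5)) :=
      mul_le_mul_of_nonneg_left hlp h0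
    have hq78 : (1-p) * (4*Real.log 2 - 1) ≤ (7/8) * (4*Real.log 2 - 1) :=
      mul_le_mul_of_nonneg_right (by linarith) (by linarith)
    nlinarith [mul_pos hp hq0]
  · -- p ∈ (1/5, 1/2]
    have hmem1 : p ∈ Set.Icc (1/5 : ℝ) (1/2) := ⟨h5.le, h1⟩
    have hmem2 : (1/2 : ℝ) ∈ Set.Icc (1/5 : ℝ) (1/2) := by norm_num
    have := A_antitone hmem1 hmem2 h1
    have hval : -((1/2 : ℝ) * Real.log (1/2)) - (1-(1/2)) * Real.log (1-(1/2))
        - 4*Real.log 2*((1/2)*(1-(1/2))) = 0 := by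
      rw [show (1:ℝ)-(1/2:ℝ) = 1/2 by norm_num, show (1/2:ℝ) = (2:ℝ)⁻¹ by norm_num, Real.log_inv]
      ring
    simp only [hval] at this
    linarith

private lemma normA {p : ℝ} (h0 : 0 ≤ p) (h1 : p ≤ 1) :
    4 * Real.log 2 * (p * (1-p)) ≤ -(p * Real.log p) - (1-p) * Real.log (1-p) := by
  rcases le_or_gt p (1/2) with h | h
  · exact normA_half h0 h
  · have := normA_half (show (0:ℝ) ≤ 1 - p by linarith) (show 1-p ≤ 1/2 by linarith)
    rw [show (1:ℝ) - (1-p) = p by ring] at this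
    nlinarith [this]

private lemma B_antitone : AntitoneOn
    (fun p : ℝ => 2*Real.log 2*Real.sqrt (p*(1-p)) - (-(p * Real.log p) - (1-p) * Real.log (1-p)))
    (Set.Icc (1/10) (1/2)) := by
  have hder : ∀ x : ℝ, 0 < x → x < 1 →
      HasDerivAt (fun p : ℝ => 2*Real.log 2*Real.sqrt (p*(1-p)) - (-(p * Real.log p) - (1-p) * Real.log (1-p)))
        (2*Real.log 2*((1-2*x)/(2*Real.sqrt (x*(1-x)))) - (Real.log (1-x) - Real.log x)) x := by
    intro x h0 h1
    have h1x : (0:ℝ) < 1 - x := by linarith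
    have hxq : (0:ℝ) < x*(1-x) := by positivity
    have hu : HasDerivAt (fun p : ℝ => 1 - p) (-1) x := by
      have h := (hasDerivAt_const x (1:ℝ)).sub (hasDerivAt_id x); simp at h; exact h
    have hquad : HasDerivAt (fun p : ℝ => p*(1-p)) (1-2*x) x := by
      have : HasDerivAt (fun p : ℝ => p*(1-p)) (1 * (1 - id x) + id x * (-1)) x := (hasDerivAt_id x).mul hu
      convert this using 1
      simp only [id_eq]; ring
    have hsq : HasDerivAt (fun p : ℝ => Real.sqrt (p*(1-p))) ((1-2*x)/(2*Real.sqrt (x*(1-x)))) x :=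
      hquad.sqrt hxq.ne'
    have hA : HasDerivAt (fun p : ℝ => p * Real.log p) (Real.log x + 1) x := by
      have : HasDerivAt (fun p : ℝ => p * Real.log p) (1 * Real.log x + x * x⁻¹) x := (hasDerivAt_id x).mul (Real.hasDerivAt_log h0.ne')
      convert this using 1
      field_simp
    have hlog : HasDerivAt (fun p : ℝ => Real.log (1-p)) ((1-x)⁻¹ * (-1)) x :=
      (Real.hasDerivAt_log h1x.ne').comp x hu
    have hB : HasDerivAt (fun p : ℝ => (1-p) * Real.log (1-p)) (-(Real.log (1-x)) - 1) x := by
      have : HasDerivAt (fun p : ℝ => (1-p) * Real.log (1-p)) (-1 * Real.log (1 - x) + (1 - x) * ((1 - x)⁻¹ * -1)) x := hu.mul hlog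
      convert this using 1
      rw [show (1-x)*((1-x)⁻¹*(-1)) = -1 from by field_simp]
      ring
    have : HasDerivAt (fun p : ℝ => 2*Real.log 2*Real.sqrt (p*(1-p)) - (-(p * Real.log p) - (1-p) * Real.log (1-p))) (2*Real.log 2*((1-2*x)/(2*Real.sqrt (x*(1-x)))) - (-(Real.log x + 1) - (-(Real.log (1-x)) - 1))) x := (hsq.const_mul (2*Real.log 2)).sub ((hA.neg).sub hB)
    convert this using 1
    ring
  apply antitoneOn_of_deriv_nonpos (convex_Icc _ _)
  · intro x hx
    obtain ⟨ha, hb⟩ := hx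
    exact (hder x (by linarith) (by linarith)).differentiableAt.continuousAt.continuousWithinAt
  · rw [interior_Icc]
    intro x hx
    obtain ⟨ha, hb⟩ := hx
    exact (hder x (by linarith) (by linarith)).differentiableAt.differentiableWithinAt
  · rw [interior_Icc]
    intro x hx
    obtain ⟨ha, hb⟩ := hx
    rw [(hder x (by linarith) (by linarith)).deriv]
    have h0 : (0:ℝ) < x := by linarith
    have h1x : (0:ℝ) < 1 - x := by linarith
    set t : ℝ := (1-x)/x with ht
    have htpos : 0 < t := by positivity
    have ht1 : 1 ≤ t := by rw [ht, le_div_iff₀ h0]; linarith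
    have ht9 : t ≤ 9 := by rw [ht, div_le_iff₀ h0]; linarith
    set s : ℝ := Real.sqrt t with hs
    have hspos : 0 < s := Real.sqrt_pos.2 htpos
    have hs2 : s^2 = t := Real.sq_sqrt htpos.le
    have hs1 : 1 ≤ s := Real.one_le_sqrt.2 ht1
    have hs3 : s ≤ 3 := by nlinarith
    -- √(x(1-x)) = x * s
    have hsqrt : Real.sqrt (x*(1-x)) = x * s := by
      rw [hs, ht]
      rw [show x*(1-x) = x^2 * ((1-x)/x) from by field_simp]
      rw [Real.sqrt_mul (by positivity), Real.sqrt_sq h0.le]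
    have hlogt : Real.log (1-x) - Real.log x = Real.log t := by
      rw [ht, Real.log_div h1x.ne' h0.ne']
    rw [hsqrt, hlogt]
    have h2x : 1 - 2*x = x*(t-1) := by rw [ht]; field_simp; ring
    -- LHS term equals log2 * (s^2-1)/s
    have hterm : 2*Real.log 2*((1-2*x)/(2*(x*s))) = Real.log 2 * ((s^2-1)/s) := by
      rw [h2x, hs2]
      field_simp
    rw [hterm]
    -- log t = 2 log s ≥ 4(s-1)/(s+1)
    have hlogs : Real.log t = 2 * Real.log s := by
      rw [← hs2, show s^2 = s*s from sq s, Real.log_mul hspos.ne' hspos.ne']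
      ring
    have hart := artanh_le_log hs1
    -- key quadratic : log2 * (s^2-1)/s ≤ 4(s-1)/(s+1)
    have hL : Real.log 2 < 0.6931471808 := Real.log_two_lt_d9
    have hkey : Real.log 2 * ((s^2-1)/s) ≤ 4*(s-1)/(s+1) := by
      rw [mul_div_assoc'] 
      rw [div_le_div_iff₀ hspos (by linarith)]
      have hq : Real.log 2 * (s+1)^2 ≤ 4*s := by nlinarith [sq_nonneg (s-1), sq_nonneg (s-3)]
      nlinarith [mul_le_mul_of_nonneg_left hq (show (0:ℝ) ≤ s - 1 by linarith)]
    have : 4*(s-1)/(s+1) ≤ Real.log t := by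
      rw [hlogs]
      have := artanh_le_log hs1
      rw [div_le_iff₀ (show (0:ℝ) < s+1 by linarith)] at this ⊢
      linarith
    linarith [hkey, this]

private lemma normB_half {p : ℝ} (h0 : 0 ≤ p) (h1 : p ≤ 1/2) :
    -(p * Real.log p) - (1-p) * Real.log (1-p) ≤ 2 * Real.log 2 * Real.sqrt (p * (1-p)) := by
  rcases eq_or_lt_of_le h0 with rfl | hp
  · simp
  have hq0 : (0:ℝ) < 1 - p := by linarith
  have hL' : (0.6931471803:ℝ) < Real.log 2 := Real.log_two_gt_d9
  rcases le_or_gt p (1/10) with h10 | h10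
  · -- crude bound region
    set v : ℝ := Real.sqrt (Real.sqrt p) with hv
    have hsp : (0:ℝ) < Real.sqrt p := Real.sqrt_pos.2 hp
    have hvpos : 0 < v := Real.sqrt_pos.2 hsp
    have hv2 : v^2 = Real.sqrt p := Real.sq_sqrt hsp.le
    have hv4 : v^4 = p := by
      rw [show (4:ℕ) = 2*2 by norm_num, pow_mul, hv2, Real.sq_sqrt hp.le]
    have hvb : v ≤ 0.5624 := by
      by_contra hc
      push_neg at hc
      have h1 : (0.5624:ℝ)^4 < v^4 := by
        apply pow_lt_pow_left₀ hc (by norm_num)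
        norm_num
      rw [hv4] at h1
      norm_num at h1
      linarith
    -- -(p log p) ≤ 4v³ - 4v⁴
    have hlogv : -(Real.log v) ≤ 1/v - 1 := by
      have := Real.log_le_sub_one_of_pos (show (0:ℝ) < v⁻¹ by positivity)
      rw [Real.log_inv] at this
      rw [one_div]
      linarith
    have hlp : -(p * Real.log p) ≤ 4*v^3 - 4*v^4 := by
      have hlogp : Real.log p = 4 * Real.log v := by
        rw [← hv4, Real.log_pow]; push_cast; ring
      rw [hlogp]
      have h2 : v^4 * (-(4 * Real.log v)) ≤ v^4 * (4*(1/v - 1)) := by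
        apply mul_le_mul_of_nonneg_left (by linarith) (by positivity)
      calc -(p * (4 * Real.log v)) = v^4 * (-(4 * Real.log v)) := by rw [hv4]; ring
        _ ≤ v^4 * (4*(1/v - 1)) := h2
        _ = 4*v^3 - 4*v^4 := by field_simp
    -- -(1-p) log(1-p) ≤ p
    have hlq : -((1-p) * Real.log (1-p)) ≤ p := by
      have := log_ge_one_sub_inv hq0
      have h2 : (1-p) * (1 - 1/(1-p)) ≤ (1-p) * Real.log (1-p) :=
        mul_le_mul_of_nonneg_left this hq0.le
      have h3 : (1-p) * (1 - 1/(1-p)) = -p := by field_simp; ring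
      linarith [h2, h3.symm.le]
    -- RHS = 2 log2 v² √(1-p), √(1-p) ≥ 0.9486
    have hsqrtq : (0.9486:ℝ) ≤ Real.sqrt (1-p) := by
      rw [show (0.9486:ℝ) = Real.sqrt (0.9486^2) from (Real.sqrt_sq (by norm_num)).symm]
      apply Real.sqrt_le_sqrt
      nlinarith
    have hsplit : Real.sqrt (p*(1-p)) = v^2 * Real.sqrt (1-p) := by
      rw [Real.sqrt_mul hp.le, hv2]
    rw [hsplit]
    -- final: 4v³-3v⁴ ≤ 2 log2 v² √(1-p)
    have hfac : 4*v - 3*v^2 ≤ 1.315 := by nlinarith [sq_nonneg v, mul_nonneg hvpos.le hvpos.le]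
    have hrhs : (1.315:ℝ) ≤ 2 * Real.log 2 * Real.sqrt (1-p) := by nlinarith
    have hv2pos : (0:ℝ) < v^2 := by positivity
    calc -(p * Real.log p) - (1-p) * Real.log (1-p) ≤ 4*v^3 - 3*v^4 := by linarith
      _ = (4*v - 3*v^2) * v^2 := by ring
      _ ≤ 1.315 * v^2 := mul_le_mul_of_nonneg_right hfac hv2pos.le
      _ ≤ (2 * Real.log 2 * Real.sqrt (1-p)) * v^2 := mul_le_mul_of_nonneg_right hrhs hv2pos.le
      _ = 2 * Real.log 2 * (v^2 * Real.sqrt (1-p)) := by ring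
  · -- antitone region
    have hmem1 : p ∈ Set.Icc (1/10 : ℝ) (1/2) := ⟨h10.le, h1⟩
    have hmem2 : (1/2 : ℝ) ∈ Set.Icc (1/10 : ℝ) (1/2) := by norm_num
    have h := B_antitone hmem1 hmem2 h1
    have hval : 2*Real.log 2*Real.sqrt ((1/2 : ℝ)*(1-(1/2))) -
        (-((1/2 : ℝ) * Real.log (1/2)) - (1-(1/2 : ℝ)) * Real.log (1-(1/2))) = 0 := by
      rw [show (1:ℝ)-(1/2:ℝ) = 1/2 by norm_num]
      rw [show (1/2 : ℝ)*(1/2 : ℝ) = (1/2)^2 by ring, Real.sqrt_sq (by norm_num)]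
      rw [show (1/2:ℝ) = (2:ℝ)⁻¹ by norm_num, Real.log_inv]
      ring
    simp only [hval] at h
    linarith

private lemma normB {p : ℝ} (h0 : 0 ≤ p) (h1 : p ≤ 1) :
    -(p * Real.log p) - (1-p) * Real.log (1-p) ≤ 2 * Real.log 2 * Real.sqrt (p * (1-p)) := by
  rcases le_or_gt p (1/2) with h | h
  · exact normB_half h0 h
  · have := normB_half (show (0:ℝ) ≤ 1 - p by linarith) (show 1-p ≤ 1/2 by linarith)
    rw [show (1:ℝ) - (1-p) = p by ring] at this
    rw [show (1-p)*p = p*(1-p) by ring] at this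
    linarith

private lemma keyE {a b : ℝ} (ha : 0 ≤ a) (hb : 0 ≤ b) (hs : 0 < a + b) :
    a * Real.log ((a+b)/a) + b * Real.log ((a+b)/b)
      = (a+b) * (-((a/(a+b)) * Real.log (a/(a+b))) - (1-(a/(a+b))) * Real.log (1-(a/(a+b)))) := by
  set s := a + b with hsdef
  set p := a / s with hpdef
  have hp1 : 1 - p = b / s := by rw [hpdef]; field_simp; ring
  rcases eq_or_lt_of_le ha with rfl | ha'
  · have hb' : 0 < b := by rw [hsdef] at hs; linarith
    simp [hpdef, hsdef, zero_add, div_self hb'.ne']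
  rcases eq_or_lt_of_le hb with rfl | hb'
  · have hp0 : p = 1 := by rw [hpdef, hsdef, add_zero, div_self ha'.ne']
    rw [hp0]
    simp [hsdef, div_self ha'.ne']
  · have hps : 0 < p := by positivity
    have hqs : 0 < 1 - p := by rw [hp1]; positivity
    have e1 : Real.log ((a+b)/a) = -Real.log p := by
      rw [hpdef, ← Real.log_inv, inv_div, hsdef]
    have e2 : Real.log ((a+b)/b) = -Real.log (1-p) := by
      rw [hp1, ← Real.log_inv, inv_div, hsdef]
    have e3 : s * p = a := by rw [hpdef]; field_simp
    have e4 : s * (1-p) = b := by rw [hp1]; field_simp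
    rw [e1, e2]
    calc a * -Real.log p + b * -Real.log (1-p)
        = (s*p) * -Real.log p + (s*(1-p)) * -Real.log (1-p) := by rw [e3, e4]
      _ = s * (-(p * Real.log p) - (1-p) * Real.log (1-p)) := by ring

private lemma pointA {a b : ℝ} (ha : 0 ≤ a) (hb : 0 ≤ b) :
    4 * Real.log 2 * (a*b) ≤ (a+b) * (a * Real.log ((a+b)/a) + b * Real.log ((a+b)/b)) := by
  rcases eq_or_lt_of_le (by positivity : (0:ℝ) ≤ a + b) with hs | hs
  · have ha0 : a = 0 := by linarith [ha, hb]
    have hb0 : b = 0 := by linarith [ha, hb]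
    simp [ha0, hb0]
  · set s := a + b with hsdef
    set p := a / s with hpdef
    have hp0 : 0 ≤ p := by positivity
    have hp1 : p ≤ 1 := by rw [hpdef]; rw [div_le_one hs]; linarith
    have hA := normA hp0 hp1
    have hab : a * b = s^2 * (p * (1-p)) := by
      rw [hpdef]; field_simp; ring
    rw [keyE ha hb hs]
    calc 4 * Real.log 2 * (a*b) = s^2 * (4 * Real.log 2 * (p * (1-p))) := by rw [hab]; ring
      _ ≤ s^2 * (-(p * Real.log p) - (1-p) * Real.log (1-p)) :=
          mul_le_mul_of_nonneg_left hA (sq_nonneg s)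
      _ = s * (s * (-(p * Real.log p) - (1-p) * Real.log (1-p))) := by ring
      _ = s * ((a+b) * (-((a/(a+b)) * Real.log (a/(a+b))) - (1-(a/(a+b))) * Real.log (1-(a/(a+b))))) := by
          rw [← hsdef, ← hpdef]

private lemma pointB {a b : ℝ} (ha : 0 ≤ a) (hb : 0 ≤ b) :
    a * Real.log ((a+b)/a) + b * Real.log ((a+b)/b) ≤ 2 * Real.log 2 * Real.sqrt (a*b) := by
  rcases eq_or_lt_of_le (by positivity : (0:ℝ) ≤ a + b) with hs | hs
  · have ha0 : a = 0 := by linarith [ha, hb]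
    have hb0 : b = 0 := by linarith [ha, hb]
    simp [ha0, hb0]
  · set s := a + b with hsdef
    set p := a / s with hpdef
    have hp0 : 0 ≤ p := by positivity
    have hp1 : p ≤ 1 := by rw [hpdef]; rw [div_le_one hs]; linarith
    have hB := normB hp0 hp1
    have hab : Real.sqrt (a * b) = s * Real.sqrt (p * (1-p)) := by
      rw [show a * b = s^2 * (p * (1-p)) from by rw [hpdef]; field_simp; ring]
      rw [Real.sqrt_mul (sq_nonneg s), Real.sqrt_sq hs.le]
    rw [keyE ha hb hs, ← hsdef, ← hpdef, hab]
    calc s * (-(p * Real.log p) - (1-p) * Real.log (1-p))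
        ≤ s * (2 * Real.log 2 * Real.sqrt (p * (1-p))) := mul_le_mul_of_nonneg_left hB hs.le
      _ = 2 * Real.log 2 * (s * Real.sqrt (p * (1-p))) := by ring

private lemma perq {a b : ℝ} (ha : 0 ≤ a) (hb : 0 ≤ b) :
    -(a * (Real.log (a/(a+b)) / Real.log 2) + b * (Real.log (b/(a+b)) / Real.log 2))
      = (a * Real.log ((a+b)/a) + b * Real.log ((a+b)/b)) / Real.log 2 := by
  have hL : (0:ℝ) < Real.log 2 := Real.log_pos (by norm_num)
  rcases eq_or_lt_of_le ha with rfl | ha'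
  · rcases eq_or_lt_of_le hb with rfl | hb'
    · simp
    · rw [show (0:ℝ) + b = b from zero_add b]
      simp [div_self hb'.ne']
  · rcases eq_or_lt_of_le hb with rfl | hb'
    · rw [show a + (0:ℝ) = a from add_zero a]
      simp [div_self ha'.ne']
    · have hs : 0 < a + b := by linarith
      have e1 : Real.log (a/(a+b)) = -Real.log ((a+b)/a) := by
        rw [← Real.log_inv, inv_div]
      have e2 : Real.log (b/(a+b)) = -Real.log ((a+b)/b) := by
        rw [← Real.log_inv, inv_div]
      rw [e1, e2]
      field_simp
      ring

theorem bhattacharyya_sq_le_ent_le_bhattacharyya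
    {Q : Type*} [Fintype Q] (P : Fin 2 → Q → ℝ)
    (hP : ∀ u q, 0 ≤ P u q) (hsum : ∑ u, ∑ q, P u q = 1) :
    (2 * ∑ q, Real.sqrt (P 0 q * P 1 q))^2 ≤
      (-∑ q, ∑ u, P u q * Real.logb 2 (P u q / (P 0 q + P 1 q))) ∧
    (-∑ q, ∑ u, P u q * Real.logb 2 (P u q / (P 0 q + P 1 q))) ≤
      2 * ∑ q, Real.sqrt (P 0 q * P 1 q) := by
  have hL : (0:ℝ) < Real.log 2 := Real.log_pos (by norm_num)
  set E : Q → ℝ := fun q => P 0 q * Real.log ((P 0 q + P 1 q)/P 0 q)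
      + P 1 q * Real.log ((P 0 q + P 1 q)/P 1 q) with hE
  have hH : (-∑ q, ∑ u, P u q * Real.logb 2 (P u q / (P 0 q + P 1 q)))
      = ∑ q, E q / Real.log 2 := by
    rw [← Finset.sum_neg_distrib]
    apply Finset.sum_congr rfl
    intro q _
    rw [Fin.sum_univ_two]
    simp only [hE, Real.logb]
    exact perq (hP 0 q) (hP 1 q)
  constructor
  · -- lower bound : Z^2 ≤ H
    rw [hH]
    set f : Q → ℝ := fun q => Real.sqrt (P 0 q + P 1 q) with hf
    set g : Q → ℝ := fun q => 2 * Real.sqrt (P 0 q * P 1 q) / Real.sqrt (P 0 q + P 1 q) with hg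
    have hfg : ∀ q, f q * g q = 2 * Real.sqrt (P 0 q * P 1 q) := by
      intro q
      rcases eq_or_lt_of_le (add_nonneg (hP 0 q) (hP 1 q)) with hs | hs
      · have ha0 : P 0 q = 0 := by linarith [hP 0 q, hP 1 q]
        simp [hf, hg, ha0, ← hs]
      · rw [hf, hg]
        have : Real.sqrt (P 0 q + P 1 q) ≠ 0 := ne_of_gt (Real.sqrt_pos.2 hs)
        field_simp
    have hf2 : ∑ q, f q ^ 2 = 1 := by
      have h2 : ∑ q, f q ^ 2 = ∑ q, (P 0 q + P 1 q) := by
        apply Finset.sum_congr rfl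
        intro q _
        exact Real.sq_sqrt (add_nonneg (hP 0 q) (hP 1 q))
      rw [h2, Finset.sum_add_distrib]
      rw [Fin.sum_univ_two] at hsum
      exact hsum
    have hg2 : ∀ q, g q ^ 2 ≤ E q / Real.log 2 := by
      intro q
      have ha : 0 ≤ P 0 q := hP 0 q
      have hb : 0 ≤ P 1 q := hP 1 q
      rcases eq_or_lt_of_le (add_nonneg ha hb) with hs | hs
      · have ha0 : P 0 q = 0 := by linarith
        have hb0 : P 1 q = 0 := by linarith
        simp [hg, hE, ha0, hb0]
      · have hgval : g q ^ 2 = 4 * (P 0 q * P 1 q) / (P 0 q + P 1 q) := by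
          rw [hg]
          rw [div_pow, mul_pow, Real.sq_sqrt (mul_nonneg ha hb), Real.sq_sqrt hs.le]
          norm_num
        rw [hgval, div_le_div_iff₀ hs hL]
        simp only [hE]
        nlinarith [pointA ha hb]
    calc (2 * ∑ q, Real.sqrt (P 0 q * P 1 q))^2
        = (∑ q, f q * g q)^2 := by
          rw [Finset.mul_sum]
          congr 1
          exact (Finset.sum_congr rfl (fun q _ => (hfg q).symm))
      _ ≤ (∑ q, f q ^ 2) * ∑ q, g q ^ 2 := Finset.sum_mul_sq_le_sq_mul_sq _ _ _
      _ = ∑ q, g q ^ 2 := by rw [hf2, one_mul]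
      _ ≤ ∑ q, E q / Real.log 2 := Finset.sum_le_sum (fun q _ => hg2 q)
  · -- upper bound : H ≤ Z
    rw [hH]
    have : ∀ q ∈ univ, E q / Real.log 2 ≤ 2 * Real.sqrt (P 0 q * P 1 q) := by
      intro q _
      rw [div_le_iff₀ hL]
      have := pointB (hP 0 q) (hP 1 q)
      calc E q ≤ 2 * Real.log 2 * Real.sqrt (P 0 q * P 1 q) := this
        _ = 2 * Real.sqrt (P 0 q * P 1 q) * Real.log 2 := by ring
    calc ∑ q, E q / Real.log 2 ≤ ∑ q, 2 * Real.sqrt (P 0 q * P 1 q) :=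
          Finset.sum_le_sum this
      _ = 2 * ∑ q, Real.sqrt (P 0 q * P 1 q) := by rw [Finset.mul_sum]
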